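/- Let m, p, q be positive integers with at most one of them equal to 1, and let n = m + p + q − 1 be the order of P(m,p,q). If exactly two of m, p, q are odd, then the independence number of P(m,p,q) equals ⌈n/2⌉ − 1; otherwise it equals ⌈n/2⌉. -/

import Mathlib

open SimpleGraph

/-- The spectral radius of a finite simple graph: the largest eigenvalue of its
adjacency matrix, i.e. the supremum of its (real) spectrum. -/
noncomputable def specRad {V : Type*} [Fintype V] (G : SimpleGraph V) : ℝ := by
  classical exact sSup (spectrum ℝ (G.adjMatrix ℝ))

/-- The adjacency matrix of a finite simple graph over ℝ. -/
noncomputable def adjMat {V : Type*} [Fintype V] (G : SimpleGraph V) : Matrix V V ℝ := by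
  classical exact G.adjMatrix ℝ

/-- The independence number of a graph: the maximum size of a set of pairwise
non-adjacent vertices. -/
noncomputable def indNum {V : Type*} [Fintype V] (G : SimpleGraph V) : ℕ :=
  sSup {k | ∃ s : Finset V, (∀ u ∈ s, ∀ v ∈ s, ¬ G.Adj u v) ∧ s.card = k}

/-- `BGraph m p q` is the graph `B(m,p,q)` obtained by attaching a cycle `C_m` and a
cycle `C_q` at the two end vertices of a path with `p` edges.  Its vertices are the
`m` vertices `u_0, …, u_{m-1}` of the `m`-cycle, the `p-1` internal vertices
`w_1, …, w_{p-1}` of the path, and the `q` vertices `v_0, …, v_{q-1}` of the `q`-cycle;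
the path joins `u_0` and `v_0`. -/
def BGraph (m p q : ℕ) : SimpleGraph (Fin m ⊕ Fin (p - 1) ⊕ Fin q) :=
  SimpleGraph.fromRel (fun a b =>
    match a, b with
    | Sum.inl i, Sum.inl j => (i.val + 1) % m = j.val
    | Sum.inr (Sum.inl i), Sum.inr (Sum.inl j) => i.val + 1 = j.val
    | Sum.inl i, Sum.inr (Sum.inl j) => i.val = 0 ∧ j.val = 0
    | Sum.inr (Sum.inl i), Sum.inr (Sum.inr j) => i.val = p - 2 ∧ j.val = 0
    | Sum.inl i, Sum.inr (Sum.inr j) => p = 1 ∧ i.val = 0 ∧ j.val = 0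
    | Sum.inr (Sum.inr i), Sum.inr (Sum.inr j) => (i.val + 1) % q = j.val
    | _, _ => False)

/-- `CGraph m q` is the graph `C(m,q)` obtained by identifying one vertex of a cycle
`C_m` with one vertex of a cycle `C_q`.  Its vertices are the `m` vertices of the
`m`-cycle together with the `q-1` remaining vertices of the `q`-cycle, which is
attached at the vertex `Sum.inl 0`. -/
def CGraph (m q : ℕ) : SimpleGraph (Fin m ⊕ Fin (q - 1)) :=
  SimpleGraph.fromRel (fun a b =>
    match a, b with
    | Sum.inl i, Sum.inl j => (i.val + 1) % m = j.val
    | Sum.inr i, Sum.inr j => i.val + 1 = j.val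
    | Sum.inl i, Sum.inr j => i.val = 0 ∧ (j.val = 0 ∨ j.val = q - 2)
    | _, _ => False)

/-- `PGraph m p q` is the graph `P(m,p,q)` obtained by identifying the two end
vertices of three internally disjoint paths with `m`, `p` and `q` edges respectively.
Its vertices are the two end vertices `u_0 = Sum.inl ()` and `v_0 = Sum.inr (Sum.inl ())`,
together with the internal vertices of the three paths. -/
def PGraph (m p q : ℕ) :
    SimpleGraph (Unit ⊕ Unit ⊕ Fin (m - 1) ⊕ Fin (p - 1) ⊕ Fin (q - 1)) :=
  SimpleGraph.fromRel (fun a b =>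
    match a, b with
    | Sum.inl _, Sum.inr (Sum.inl _) => m = 1 ∨ p = 1 ∨ q = 1
    | Sum.inl _, Sum.inr (Sum.inr (Sum.inl i)) => i.val = 0
    | Sum.inl _, Sum.inr (Sum.inr (Sum.inr (Sum.inl i))) => i.val = 0
    | Sum.inl _, Sum.inr (Sum.inr (Sum.inr (Sum.inr i))) => i.val = 0
    | Sum.inr (Sum.inl _), Sum.inr (Sum.inr (Sum.inl i)) => i.val = m - 2
    | Sum.inr (Sum.inl _), Sum.inr (Sum.inr (Sum.inr (Sum.inl i))) => i.val = p - 2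
    | Sum.inr (Sum.inl _), Sum.inr (Sum.inr (Sum.inr (Sum.inr i))) => i.val = q - 2
    | Sum.inr (Sum.inr (Sum.inl i)), Sum.inr (Sum.inr (Sum.inl j)) => i.val + 1 = j.val
    | Sum.inr (Sum.inr (Sum.inr (Sum.inl i))), Sum.inr (Sum.inr (Sum.inr (Sum.inl j))) =>
        i.val + 1 = j.val
    | Sum.inr (Sum.inr (Sum.inr (Sum.inr i))), Sum.inr (Sum.inr (Sum.inr (Sum.inr j))) =>
        i.val + 1 = j.val
    | _, _ => False)

/-- `H` is contained in `G` as a subgraph, i.e. `G` has a subgraph isomorphic to `H`. -/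
def containsCopy {W V : Type*} (H : SimpleGraph W) (G : SimpleGraph V) : Prop :=
  ∃ f : H →g G, Function.Injective f

lemma indNum_eq' {V : Type*} [Fintype V] (G : SimpleGraph V) (k : ℕ)
    (hmem : ∃ s : Finset V, (∀ u ∈ s, ∀ v ∈ s, ¬ G.Adj u v) ∧ s.card = k)
    (hub : ∀ s : Finset V, (∀ u ∈ s, ∀ v ∈ s, ¬ G.Adj u v) → s.card ≤ k) :
    indNum G = k := by
  apply IsGreatest.csSup_eq
  exact ⟨hmem, by rintro x ⟨s, hs, rfl⟩; exact hub s hs⟩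

lemma nonconsec_card (T : Finset ℕ) (lo hi : ℕ)
    (hmem : ∀ i ∈ T, lo ≤ i ∧ i < hi)
    (h : ∀ i ∈ T, ∀ j ∈ T, i + 1 ≠ j) :
    T.card ≤ (hi - lo + 1) / 2 := by
  have key : T.card ≤ (Finset.range ((hi - lo + 1) / 2)).card := by
    apply Finset.card_le_card_of_injOn (fun i => (i - lo) / 2)
    · intro i hi'
      have := hmem i hi'
      simp only [Finset.coe_range, Set.mem_Iio]; omega
    · intro i hi' j hj' hij
      have h1 := hmem i hi'
      have h2 := hmem j hj'
      by_contra hne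
      rcases Nat.lt_or_ge i j with hlt | hge
      · have := h i hi' j hj'; simp only at hij; omega
      · have := h j hj' i hi'; simp only at hij; omega
  simpa using key

section Upper
variable {m p q : ℕ}

lemma adj_uv (h : m = 1 ∨ p = 1 ∨ q = 1) :
    (PGraph m p q).Adj (Sum.inl ()) (Sum.inr (Sum.inl ())) := by
  simp [PGraph, SimpleGraph.fromRel_adj, h]

lemma adj_aa {i j : Fin (m-1)} (h : i.val + 1 = j.val) :
    (PGraph m p q).Adj (Sum.inr (Sum.inr (Sum.inl i))) (Sum.inr (Sum.inr (Sum.inl j))) := by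
  simp only [PGraph, SimpleGraph.fromRel_adj]
  refine ⟨?_, Or.inl h⟩
  simp only [ne_eq, Sum.inr.injEq, Sum.inl.injEq]
  intro hij; subst hij; omega

lemma adj_bb {i j : Fin (p-1)} (h : i.val + 1 = j.val) :
    (PGraph m p q).Adj (Sum.inr (Sum.inr (Sum.inr (Sum.inl i))))
      (Sum.inr (Sum.inr (Sum.inr (Sum.inl j)))) := by
  simp only [PGraph, SimpleGraph.fromRel_adj]
  refine ⟨?_, Or.inl h⟩
  simp only [ne_eq, Sum.inr.injEq, Sum.inl.injEq]
  intro hij; subst hij; omega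

lemma adj_cc {i j : Fin (q-1)} (h : i.val + 1 = j.val) :
    (PGraph m p q).Adj (Sum.inr (Sum.inr (Sum.inr (Sum.inr i))))
      (Sum.inr (Sum.inr (Sum.inr (Sum.inr j)))) := by
  simp only [PGraph, SimpleGraph.fromRel_adj]
  refine ⟨?_, Or.inl h⟩
  simp only [ne_eq, Sum.inr.injEq]
  intro hij; subst hij; omega

lemma adj_ua {i : Fin (m-1)} (h : i.val = 0) :
    (PGraph m p q).Adj (Sum.inl ()) (Sum.inr (Sum.inr (Sum.inl i))) := by
  simp [PGraph, SimpleGraph.fromRel_adj, h]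

lemma adj_ub {i : Fin (p-1)} (h : i.val = 0) :
    (PGraph m p q).Adj (Sum.inl ()) (Sum.inr (Sum.inr (Sum.inr (Sum.inl i)))) := by
  simp [PGraph, SimpleGraph.fromRel_adj, h]

lemma adj_uc {i : Fin (q-1)} (h : i.val = 0) :
    (PGraph m p q).Adj (Sum.inl ()) (Sum.inr (Sum.inr (Sum.inr (Sum.inr i)))) := by
  simp [PGraph, SimpleGraph.fromRel_adj, h]

lemma adj_va {i : Fin (m-1)} (h : i.val = m - 2) :
    (PGraph m p q).Adj (Sum.inr (Sum.inl ())) (Sum.inr (Sum.inr (Sum.inl i))) := by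
  simp [PGraph, SimpleGraph.fromRel_adj, h]

lemma adj_vb {i : Fin (p-1)} (h : i.val = p - 2) :
    (PGraph m p q).Adj (Sum.inr (Sum.inl ())) (Sum.inr (Sum.inr (Sum.inr (Sum.inl i)))) := by
  simp [PGraph, SimpleGraph.fromRel_adj, h]

lemma adj_vc {i : Fin (q-1)} (h : i.val = q - 2) :
    (PGraph m p q).Adj (Sum.inr (Sum.inl ())) (Sum.inr (Sum.inr (Sum.inr (Sum.inr i)))) := by
  simp [PGraph, SimpleGraph.fromRel_adj, h]

lemma unit_card (t : Finset Unit) : t.card = if () ∈ t then 1 else 0 := by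
  split_ifs with h
  · have : t = {()} := by ext ⟨⟩; simp [h]
    simp [this]
  · have : t = ∅ := by ext ⟨⟩; simp [h]
    simp [this]


lemma path_bound {k : ℕ} (T : Finset (Fin k)) (lo hi : ℕ)
    (hlo : ∀ i ∈ T, lo ≤ i.val) (hhi : ∀ i ∈ T, i.val < hi)
    (hcons : ∀ i ∈ T, ∀ j ∈ T, i.val + 1 ≠ j.val) : T.card ≤ (hi - lo + 1) / 2 := by
  have h := nonconsec_card (T.image Fin.val) lo hi ?_ ?_
  · rwa [Finset.card_image_of_injective _ Fin.val_injective] at h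
  · intro i hi'
    rcases Finset.mem_image.1 hi' with ⟨i', hi'', rfl⟩
    exact ⟨hlo i' hi'', hhi i' hi''⟩
  · intro i hi' j hj'
    rcases Finset.mem_image.1 hi' with ⟨i', hi'', rfl⟩
    rcases Finset.mem_image.1 hj' with ⟨j', hj'', rfl⟩
    exact hcons i' hi'' j' hj''

lemma upper_bound (m p q : ℕ) (hm : 1 ≤ m) (hp : 1 ≤ p) (hq : 1 ≤ q)
    (s : Finset (Unit ⊕ Unit ⊕ Fin (m - 1) ⊕ Fin (p - 1) ⊕ Fin (q - 1)))
    (hs : ∀ x ∈ s, ∀ y ∈ s, ¬ (PGraph m p q).Adj x y) :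
    s.card ≤ if m % 2 + p % 2 + q % 2 = 2 then (m+p+q)/2 - 1 else (m+p+q)/2 := by
  classical
  set A : Finset (Fin (m-1)) := s.toRight.toRight.toLeft with hA
  set B : Finset (Fin (p-1)) := s.toRight.toRight.toRight.toLeft with hB
  set C : Finset (Fin (q-1)) := s.toRight.toRight.toRight.toRight with hC
  have hAmem : ∀ i : Fin (m-1), i ∈ A ↔ Sum.inr (Sum.inr (Sum.inl i)) ∈ s := by
    intro i; simp [hA]
  have hBmem : ∀ i : Fin (p-1), i ∈ B ↔ Sum.inr (Sum.inr (Sum.inr (Sum.inl i))) ∈ s := by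
    intro i; simp [hB]
  have hCmem : ∀ i : Fin (q-1), i ∈ C ↔ Sum.inr (Sum.inr (Sum.inr (Sum.inr i))) ∈ s := by
    intro i; simp [hC]
  have hcard : s.card = s.toLeft.card + s.toRight.toLeft.card + A.card + B.card + C.card := by
    rw [hA, hB, hC]
    rw [← Finset.card_toLeft_add_card_toRight (u := s),
        ← Finset.card_toLeft_add_card_toRight (u := s.toRight),
        ← Finset.card_toLeft_add_card_toRight (u := s.toRight.toRight),
        ← Finset.card_toLeft_add_card_toRight (u := s.toRight.toRight.toRight)]
    ring
  have hcu : s.toLeft.card = if Sum.inl () ∈ s then 1 else 0 := by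
    rw [unit_card]; simp
  have hcv : s.toRight.toLeft.card = if Sum.inr (Sum.inl ()) ∈ s then 1 else 0 := by
    rw [unit_card]; simp
  -- consecutive constraints
  have hconsA : ∀ i ∈ A, ∀ j ∈ A, i.val + 1 ≠ j.val := fun i hi j hj h =>
    hs _ ((hAmem i).1 hi) _ ((hAmem j).1 hj) (adj_aa h)
  have hconsB : ∀ i ∈ B, ∀ j ∈ B, i.val + 1 ≠ j.val := fun i hi j hj h =>
    hs _ ((hBmem i).1 hi) _ ((hBmem j).1 hj) (adj_bb h)
  have hconsC : ∀ i ∈ C, ∀ j ∈ C, i.val + 1 ≠ j.val := fun i hi j hj h =>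
    hs _ ((hCmem i).1 hi) _ ((hCmem j).1 hj) (adj_cc h)
  by_cases hu : Sum.inl () ∈ s <;>
    by_cases hv : (Sum.inr (Sum.inl ()) :
      Unit ⊕ Unit ⊕ Fin (m - 1) ⊕ Fin (p - 1) ⊕ Fin (q - 1)) ∈ s
  · -- both endpoints
    have hne1 : ¬ (m = 1 ∨ p = 1 ∨ q = 1) := fun h => hs _ hu _ hv (adj_uv h)
    have haA : A.card ≤ ((m - 2) - 1 + 1) / 2 := by
      apply path_bound
      · intro i hi'
        rcases Nat.eq_zero_or_pos i.val with h0 | h1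
        · exact absurd (adj_ua h0) (hs _ hu _ ((hAmem i).1 hi'))
        · exact h1
      · intro i hi'
        have h1 := i.isLt
        have h2 : i.val ≠ m - 2 := fun h => hs _ hv _ ((hAmem i).1 hi') (adj_va h)
        omega
      · exact hconsA
    have haB : B.card ≤ ((p - 2) - 1 + 1) / 2 := by
      apply path_bound
      · intro i hi'
        rcases Nat.eq_zero_or_pos i.val with h0 | h1
        · exact absurd (adj_ub h0) (hs _ hu _ ((hBmem i).1 hi'))
        · exact h1
      · intro i hi'
        have h1 := i.isLt
        have h2 : i.val ≠ p - 2 := fun h => hs _ hv _ ((hBmem i).1 hi') (adj_vb h)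
        omega
      · exact hconsB
    have haC : C.card ≤ ((q - 2) - 1 + 1) / 2 := by
      apply path_bound
      · intro i hi'
        rcases Nat.eq_zero_or_pos i.val with h0 | h1
        · exact absurd (adj_uc h0) (hs _ hu _ ((hCmem i).1 hi'))
        · exact h1
      · intro i hi'
        have h1 := i.isLt
        have h2 : i.val ≠ q - 2 := fun h => hs _ hv _ ((hCmem i).1 hi') (adj_vc h)
        omega
      · exact hconsC
    rw [hcu, hcv] at hcard
    simp only [hu, hv, if_pos] at hcard
    split_ifs <;> omega
  · -- u only
    have haA : A.card ≤ ((m - 2) - 1 + 1) / 2 + ((m-2) % 2) := by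
      have : A.card ≤ ((m - 1) - 1 + 1) / 2 := by
        apply path_bound
        · intro i hi'
          rcases Nat.eq_zero_or_pos i.val with h0 | h1
          · exact absurd (adj_ua h0) (hs _ hu _ ((hAmem i).1 hi'))
          · exact h1
        · exact fun i _ => i.isLt
        · exact hconsA
      omega
    have haB : B.card ≤ ((p - 1) - 1 + 1) / 2 := by
      apply path_bound
      · intro i hi'
        rcases Nat.eq_zero_or_pos i.val with h0 | h1
        · exact absurd (adj_ub h0) (hs _ hu _ ((hBmem i).1 hi'))
        · exact h1
      · exact fun i _ => i.isLt
      · exact hconsB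
    have haC : C.card ≤ ((q - 1) - 1 + 1) / 2 := by
      apply path_bound
      · intro i hi'
        rcases Nat.eq_zero_or_pos i.val with h0 | h1
        · exact absurd (adj_uc h0) (hs _ hu _ ((hCmem i).1 hi'))
        · exact h1
      · exact fun i _ => i.isLt
      · exact hconsC
    rw [hcu, hcv] at hcard
    simp only [hu, hv, if_pos, if_neg, if_false] at hcard
    split_ifs <;> omega
  · -- v only
    have haA : A.card ≤ ((m - 2) - 0 + 1) / 2 := by
      apply path_bound
      · exact fun i _ => Nat.zero_le _
      · intro i hi'
        have h1 := i.isLt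
        have h2 : i.val ≠ m - 2 := fun h => hs _ hv _ ((hAmem i).1 hi') (adj_va h)
        omega
      · exact hconsA
    have haB : B.card ≤ ((p - 2) - 0 + 1) / 2 := by
      apply path_bound
      · exact fun i _ => Nat.zero_le _
      · intro i hi'
        have h1 := i.isLt
        have h2 : i.val ≠ p - 2 := fun h => hs _ hv _ ((hBmem i).1 hi') (adj_vb h)
        omega
      · exact hconsB
    have haC : C.card ≤ ((q - 2) - 0 + 1) / 2 := by
      apply path_bound
      · exact fun i _ => Nat.zero_le _
      · intro i hi'
        have h1 := i.isLt
        have h2 : i.val ≠ q - 2 := fun h => hs _ hv _ ((hCmem i).1 hi') (adj_vc h)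
        omega
      · exact hconsC
    rw [hcu, hcv] at hcard
    simp only [hu, hv, if_pos, if_neg, if_false] at hcard
    split_ifs <;> omega
  · -- neither
    have haA : A.card ≤ ((m - 1) - 0 + 1) / 2 := by
      apply path_bound
      · exact fun i _ => Nat.zero_le _
      · exact fun i _ => i.isLt
      · exact hconsA
    have haB : B.card ≤ ((p - 1) - 0 + 1) / 2 := by
      apply path_bound
      · exact fun i _ => Nat.zero_le _
      · exact fun i _ => i.isLt
      · exact hconsB
    have haC : C.card ≤ ((q - 1) - 0 + 1) / 2 := by
      apply path_bound
      · exact fun i _ => Nat.zero_le _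
      · exact fun i _ => i.isLt
      · exact hconsC
    rw [hcu, hcv] at hcard
    simp only [hu, hv, if_neg, if_false] at hcard
    split_ifs <;> omega

def evenEmb (k : ℕ) : Fin ((k+1)/2) ↪ Fin k :=
  ⟨fun j => ⟨2 * j.val, by omega⟩, by
    intro a b h
    simp only [Fin.mk.injEq] at h
    exact Fin.ext (by omega)⟩

def oddEmb (k : ℕ) : Fin (k/2) ↪ Fin k :=
  ⟨fun j => ⟨2 * j.val + 1, by omega⟩, by
    intro a b h
    simp only [Fin.mk.injEq] at h
    exact Fin.ext (by omega)⟩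

section LB
variable (m p q : ℕ)

def embA : Fin (m-1) ↪ (Unit ⊕ Unit ⊕ Fin (m - 1) ⊕ Fin (p - 1) ⊕ Fin (q - 1)) :=
  ⟨fun i => Sum.inr (Sum.inr (Sum.inl i)), by intro a b h; simpa using h⟩

def embB : Fin (p-1) ↪ (Unit ⊕ Unit ⊕ Fin (m - 1) ⊕ Fin (p - 1) ⊕ Fin (q - 1)) :=
  ⟨fun i => Sum.inr (Sum.inr (Sum.inr (Sum.inl i))), by intro a b h; simpa using h⟩

def embC : Fin (q-1) ↪ (Unit ⊕ Unit ⊕ Fin (m - 1) ⊕ Fin (p - 1) ⊕ Fin (q - 1)) :=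
  ⟨fun i => Sum.inr (Sum.inr (Sum.inr (Sum.inr i))), by intro a b h; simpa using h⟩

lemma lower_even (hm : 1 ≤ m) (hp : 1 ≤ p) (hq : 1 ≤ q) :
    ∃ s : Finset (Unit ⊕ Unit ⊕ Fin (m - 1) ⊕ Fin (p - 1) ⊕ Fin (q - 1)),
      (∀ x ∈ s, ∀ y ∈ s, ¬ (PGraph m p q).Adj x y) ∧ s.card = m/2 + p/2 + q/2 := by
  classical
  refine ⟨(Finset.univ.map ((evenEmb (m-1)).trans (embA m p q))) ∪
          (Finset.univ.map ((evenEmb (p-1)).trans (embB m p q))) ∪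
          (Finset.univ.map ((evenEmb (q-1)).trans (embC m p q))), ?_, ?_⟩
  · intro x hx y hy hadj
    simp only [Finset.mem_union, Finset.mem_map, Finset.mem_univ, true_and,
      Function.Embedding.trans_apply, evenEmb, embA, embB, embC,
      Function.Embedding.coeFn_mk] at hx hy
    rcases hx with (⟨a, rfl⟩ | ⟨a, rfl⟩) | ⟨a, rfl⟩ <;>
      rcases hy with (⟨b, rfl⟩ | ⟨b, rfl⟩) | ⟨b, rfl⟩ <;>
      (simp [PGraph, SimpleGraph.fromRel_adj, Fin.mk.injEq, DFunLike.coe] at hadj <;> omega)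
  · rw [Finset.card_union_of_disjoint, Finset.card_union_of_disjoint]
    · simp only [Finset.card_map, Finset.card_univ, Fintype.card_fin]
      omega
    · simp only [Finset.disjoint_left, Finset.mem_map, Finset.mem_univ, true_and,
        Function.Embedding.trans_apply, evenEmb, embA, embB, embC,
        Function.Embedding.coeFn_mk]
      rintro x ⟨a, rfl⟩ ⟨b, hb⟩
      simp [DFunLike.coe] at hb
    · simp only [Finset.disjoint_left, Finset.mem_union, Finset.mem_map, Finset.mem_univ,
        true_and, Function.Embedding.trans_apply, evenEmb, embA, embB, embC,
        Function.Embedding.coeFn_mk]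
      rintro x (⟨a, rfl⟩ | ⟨a, rfl⟩) ⟨b, hb⟩ <;> simp [DFunLike.coe] at hb

lemma lower_odd (hm : 1 ≤ m) (hp : 1 ≤ p) (hq : 1 ≤ q) :
    ∃ s : Finset (Unit ⊕ Unit ⊕ Fin (m - 1) ⊕ Fin (p - 1) ⊕ Fin (q - 1)),
      (∀ x ∈ s, ∀ y ∈ s, ¬ (PGraph m p q).Adj x y) ∧
      s.card = 1 + (m-1)/2 + (p-1)/2 + (q-1)/2 := by
  classical
  refine ⟨insert (Sum.inl ())
          ((Finset.univ.map ((oddEmb (m-1)).trans (embA m p q))) ∪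
          (Finset.univ.map ((oddEmb (p-1)).trans (embB m p q))) ∪
          (Finset.univ.map ((oddEmb (q-1)).trans (embC m p q)))), ?_, ?_⟩
  · intro x hx y hy hadj
    simp only [Finset.mem_insert, Finset.mem_union, Finset.mem_map, Finset.mem_univ, true_and,
      Function.Embedding.trans_apply, oddEmb, embA, embB, embC,
      Function.Embedding.coeFn_mk] at hx hy
    rcases hx with rfl | ((⟨a, rfl⟩ | ⟨a, rfl⟩) | ⟨a, rfl⟩) <;>
      rcases hy with rfl | ((⟨b, rfl⟩ | ⟨b, rfl⟩) | ⟨b, rfl⟩) <;>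
      (simp [PGraph, SimpleGraph.fromRel_adj, Fin.mk.injEq, DFunLike.coe] at hadj <;> omega)
  · rw [Finset.card_insert_of_notMem, Finset.card_union_of_disjoint,
        Finset.card_union_of_disjoint]
    · simp only [Finset.card_map, Finset.card_univ, Fintype.card_fin]
      omega
    · simp only [Finset.disjoint_left, Finset.mem_map, Finset.mem_univ, true_and,
        Function.Embedding.trans_apply, oddEmb, embA, embB, embC,
        Function.Embedding.coeFn_mk]
      rintro x ⟨a, rfl⟩ ⟨b, hb⟩
      simp [DFunLike.coe] at hb
    · simp only [Finset.disjoint_left, Finset.mem_union, Finset.mem_map, Finset.mem_univ,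
        true_and, Function.Embedding.trans_apply, oddEmb, embA, embB, embC,
        Function.Embedding.coeFn_mk]
      rintro x (⟨a, rfl⟩ | ⟨a, rfl⟩) ⟨b, hb⟩ <;> simp [DFunLike.coe] at hb
    · simp [oddEmb, embA, embB, embC]

end LB

/-- Let `m, p, q` be positive integers, at most one of them equal to
`1`, and let `n = m + p + q - 1` be the order of `P(m,p,q)`.  If exactly two of
`m, p, q` are odd, then `α(P(m,p,q)) = ⌈n/2⌉ - 1`; otherwise `α(P(m,p,q)) = ⌈n/2⌉`.
(Here `⌈n/2⌉ = (n+1)/2` in natural-number arithmetic.) -/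
theorem indNum_PGraph (m p q : ℕ) (hm : 1 ≤ m) (hp : 1 ≤ p) (hq : 1 ≤ q)
    (hone : ¬ (m = 1 ∧ p = 1) ∧ ¬ (m = 1 ∧ q = 1) ∧ ¬ (p = 1 ∧ q = 1))
    (n : ℕ) (hn : n = m + p + q - 1) :
    (((Odd m ∧ Odd p ∧ ¬ Odd q) ∨ (Odd m ∧ ¬ Odd p ∧ Odd q) ∨ (¬ Odd m ∧ Odd p ∧ Odd q)) →
      indNum (PGraph m p q) = (n + 1) / 2 - 1) ∧
    (¬ ((Odd m ∧ Odd p ∧ ¬ Odd q) ∨ (Odd m ∧ ¬ Odd p ∧ Odd q) ∨ (¬ Odd m ∧ Odd p ∧ Odd q)) →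
      indNum (PGraph m p q) = (n + 1) / 2) := by
  subst hn
  have hodd : ∀ k : ℕ, Odd k ↔ k % 2 = 1 := fun k => Nat.odd_iff
  have key : ∀ t : ℕ, (∃ s : Finset (Unit ⊕ Unit ⊕ Fin (m - 1) ⊕ Fin (p - 1) ⊕ Fin (q - 1)),
      (∀ x ∈ s, ∀ y ∈ s, ¬ (PGraph m p q).Adj x y) ∧ s.card = t) →
      (∀ s : Finset (Unit ⊕ Unit ⊕ Fin (m - 1) ⊕ Fin (p - 1) ⊕ Fin (q - 1)),
        (∀ x ∈ s, ∀ y ∈ s, ¬ (PGraph m p q).Adj x y) → s.card ≤ t) →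
      indNum (PGraph m p q) = t := fun t h1 h2 => indNum_eq' _ t h1 h2
  constructor
  · intro h
    simp only [hodd] at h
    have hpar : m % 2 + p % 2 + q % 2 = 2 := by omega
    have htarget : (m + p + q - 1 + 1) / 2 - 1 = m / 2 + p / 2 + q / 2 := by omega
    rw [htarget]
    apply key
    · exact lower_even m p q hm hp hq
    · intro s hs
      have := upper_bound m p q hm hp hq s hs
      rw [if_pos hpar] at this
      omega
  · intro h
    simp only [hodd] at h
    have hpar : m % 2 + p % 2 + q % 2 ≠ 2 := by omega
    by_cases hall : m % 2 = 1 ∧ p % 2 = 1 ∧ q % 2 = 1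
    · have htarget : (m + p + q - 1 + 1) / 2 = 1 + (m-1)/2 + (p-1)/2 + (q-1)/2 := by omega
      rw [htarget]
      apply key
      · exact lower_odd m p q hm hp hq
      · intro s hs
        have := upper_bound m p q hm hp hq s hs
        rw [if_neg hpar] at this
        omega
    · have htarget : (m + p + q - 1 + 1) / 2 = m / 2 + p / 2 + q / 2 := by omega
      rw [htarget]
      apply key
      · exact lower_even m p q hm hp hq
      · intro s hs
        have := upper_bound m p q hm hp hq s hs
        rw [if_neg hpar] at this
        omega
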